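/- Let u₀, u₂ ∈ ℂ², α > 0, λ ∈ ℝ, and set Φ(x) := (u₀ + u₂ x²) e^{-α x²/2}. Then -B·Φ''(x) + x²·A·Φ(x) = λ·Φ(x) holds for all x ∈ ℝ if and only if the following three matrix equations hold: (A - α²B)·u₂ = 0, (A - α²B)·u₀ + (5αB - λ)·u₂ = 0, and (αB - λ)·u₀ - 2B·u₂ = 0. -/

import Mathlib

/-- The matrix `A = [[a, ξ], [conj ξ, c]]`. -/
noncomputable def Amat (a c : ℝ) (ξ : ℂ) : Matrix (Fin 2) (Fin 2) ℂ :=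
  !![(a : ℂ), ξ; (starRingEnd ℂ) ξ, (c : ℂ)]

/-- The matrix `B = [[1, 0], [0, b]]`. -/
noncomputable def Bmat (b : ℝ) : Matrix (Fin 2) (Fin 2) ℂ :=
  !![1, 0; 0, (b : ℂ)]

lemma poly_vanish_aux (w₄ w₂ w₀ : Fin 2 → ℂ)
    (h : ∀ x : ℝ, ((x:ℂ))^4 • w₄ + ((x:ℂ))^2 • w₂ + w₀ = 0) :
    w₄ = 0 ∧ w₂ = 0 ∧ w₀ = 0 := by
  have h0 := h 0
  simp at h0
  have h1 := h 1
  simp at h1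
  have hs2 : ((Real.sqrt 2 : ℝ) : ℂ) ^ 2 = 2 := by
    norm_cast
    rw [Real.sq_sqrt] <;> norm_num
  have hs4 : ((Real.sqrt 2 : ℝ) : ℂ) ^ 4 = 4 := by
    have h' : ((Real.sqrt 2 : ℝ) : ℂ) ^ 4 = (((Real.sqrt 2 : ℝ) : ℂ) ^ 2) ^ 2 := by ring
    rw [h', hs2]; norm_num
  have h2 := h (Real.sqrt 2)
  rw [hs2, hs4] at h2
  have hw4 : w₄ = 0 := by
    funext i
    have a0 := congrFun h0 i
    have a1 := congrFun h1 i
    have a2 := congrFun h2 i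
    simp [Pi.smul_apply, smul_eq_mul] at a0 a1 a2 ⊢
    linear_combination (a2 - 2*a1 + a0)/2
  have hw2 : w₂ = 0 := by
    funext i
    have a0 := congrFun h0 i
    have a1 := congrFun h1 i
    have a4 := congrFun hw4 i
    simp [Pi.smul_apply, smul_eq_mul] at a0 a1 a4 ⊢
    linear_combination a1 - a4 - a0
  exact ⟨hw4, hw2, h0⟩

lemma deriv2_formula (u₀ u₂ : Fin 2 → ℂ) (α : ℝ)
    (Φ : ℝ → Fin 2 → ℂ)
    (hΦ : Φ = fun x => (Real.exp (-α * x ^ 2 / 2) : ℂ) • (u₀ + ((x : ℂ) ^ 2) • u₂)) :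
    ∀ x : ℝ, deriv (deriv Φ) x =
      (Real.exp (-α * x ^ 2 / 2) : ℂ) •
        ((2:ℂ) • u₂ + (-(α:ℂ)) • (u₀ + ((x:ℂ) ^ 2) • u₂)
          + (-(α:ℂ) * x) • (((2:ℂ) * x) • u₂)
          + (-(α:ℂ) * x) • (((2:ℂ) * x) • u₂ + (-(α:ℂ) * x) • (u₀ + ((x:ℂ) ^ 2) • u₂))) := by
  have h0 : ∀ x : ℝ, HasDerivAt (fun x : ℝ => (x:ℂ)) 1 x :=
    fun x => Complex.ofRealCLM.hasDerivAt
  have hE : ∀ x : ℝ, HasDerivAt (fun x : ℝ => ((Real.exp (-α * x ^ 2 / 2) : ℝ) : ℂ))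
      ((-(α:ℂ) * x) * (Real.exp (-α * x ^ 2 / 2) : ℝ)) x := by
    intro x
    have h1 : HasDerivAt (fun x : ℝ => -α * x ^ 2 / 2) (-α * x) x := by
      have := ((hasDerivAt_pow 2 x).const_mul (-α)).div_const 2
      refine this.congr_deriv ?_
      ring
    have h2 := (Real.hasDerivAt_exp (-α * x ^ 2 / 2)).comp x h1
    have h3 := h2.ofReal_comp
    refine h3.congr_deriv ?_
    push_cast
    ring
  have hv : ∀ x : ℝ, HasDerivAt (fun x : ℝ => u₀ + ((x : ℂ) ^ 2) • u₂)
      (((2:ℂ) * x) • u₂) x := by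
    intro x
    have h : HasDerivAt (fun x : ℝ => ((x:ℂ)) ^ 2) (2 * (x:ℂ)) x := by
      have := (h0 x).mul (h0 x)
      simp only [pow_two]
      refine this.congr_deriv ?_
      ring
    simpa using (h.smul_const u₂).const_add u₀
  have hΦ1 : ∀ x : ℝ, HasDerivAt Φ
      ((Real.exp (-α * x ^ 2 / 2) : ℂ) •
        (((2:ℂ) * x) • u₂ + (-(α:ℂ) * x) • (u₀ + ((x:ℂ) ^ 2) • u₂))) x := by
    intro x
    rw [hΦ]
    have := (hE x).smul (hv x)
    refine this.congr_deriv ?_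
    module
  have hd1 : deriv Φ = fun x : ℝ =>
      (Real.exp (-α * x ^ 2 / 2) : ℂ) •
        (((2:ℂ) * x) • u₂ + (-(α:ℂ) * x) • (u₀ + ((x:ℂ) ^ 2) • u₂)) :=
    funext fun x => (hΦ1 x).deriv
  have hw : ∀ x : ℝ, HasDerivAt (fun x : ℝ =>
      (((2:ℂ) * x) • u₂ + (-(α:ℂ) * x) • (u₀ + ((x:ℂ) ^ 2) • u₂)))
      ((2:ℂ) • u₂ + ((-(α:ℂ) * x) • (((2:ℂ) * x) • u₂)
        + (-(α:ℂ)) • (u₀ + ((x:ℂ) ^ 2) • u₂))) x := by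
    intro x
    have ha : HasDerivAt (fun x : ℝ => ((2:ℂ) * x) • u₂) ((2:ℂ) • u₂) x := by
      have := (((h0 x).const_mul (2:ℂ)).smul_const u₂)
      simpa using this
    have hb : HasDerivAt (fun x : ℝ => (-(α:ℂ) * x) • (u₀ + ((x:ℂ) ^ 2) • u₂))
        ((-(α:ℂ) * x) • (((2:ℂ) * x) • u₂) + (-(α:ℂ)) • (u₀ + ((x:ℂ) ^ 2) • u₂)) x := by
      have hc : HasDerivAt (fun x : ℝ => -(α:ℂ) * x) (-(α:ℂ)) x := by
        simpa using (h0 x).const_mul (-(α:ℂ))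
      exact hc.smul (hv x)
    exact ha.add hb
  intro x
  have hΦ2 : HasDerivAt (deriv Φ)
      ((Real.exp (-α * x ^ 2 / 2) : ℂ) •
        ((2:ℂ) • u₂ + (-(α:ℂ)) • (u₀ + ((x:ℂ) ^ 2) • u₂)
          + (-(α:ℂ) * x) • (((2:ℂ) * x) • u₂)
          + (-(α:ℂ) * x) • (((2:ℂ) * x) • u₂ + (-(α:ℂ) * x) • (u₀ + ((x:ℂ) ^ 2) • u₂)))) x := by
    rw [hd1]
    have := (hE x).smul (hw x)
    refine this.congr_deriv ?_
    module
  exact hΦ2.deriv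

theorem even_quadratic_eigen_equation_iff
    (a c b : ℝ) (ξ : ℂ) (ha : 0 < a) (hc : 0 < c) (hb : 1 ≤ b)
    (hξ : ‖ξ‖ ^ 2 < a * c)
    (u₀ u₂ : Fin 2 → ℂ) (α : ℝ) (hα : 0 < α) (l : ℝ)
    (Φ : ℝ → Fin 2 → ℂ)
    (hΦ : Φ = fun x => (Real.exp (-α * x ^ 2 / 2) : ℂ) • (u₀ + ((x : ℂ) ^ 2) • u₂)) :
    (∀ x : ℝ, -((Bmat b).mulVec (deriv (deriv Φ) x))
        + ((x : ℂ) ^ 2) • (Amat a c ξ).mulVec (Φ x) = (l : ℂ) • Φ x)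
      ↔ ((Amat a c ξ - ((α : ℂ) ^ 2) • Bmat b).mulVec u₂ = 0 ∧
          (Amat a c ξ - ((α : ℂ) ^ 2) • Bmat b).mulVec u₀
            + ((5 * (α : ℂ)) • Bmat b - (l : ℂ) • (1 : Matrix (Fin 2) (Fin 2) ℂ)).mulVec u₂ = 0 ∧
          ((α : ℂ) • Bmat b - (l : ℂ) • (1 : Matrix (Fin 2) (Fin 2) ℂ)).mulVec u₀
            - (2 : ℂ) • (Bmat b).mulVec u₂ = 0) := by
  set A := Amat a c ξ with hA
  set B := Bmat b with hB
  set w₄ : Fin 2 → ℂ := A.mulVec u₂ - ((α:ℂ)^2) • B.mulVec u₂ with hw₄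
  set w₂ : Fin 2 → ℂ := A.mulVec u₀ - ((α:ℂ)^2) • B.mulVec u₀
      + (5*(α:ℂ)) • B.mulVec u₂ - (l:ℂ) • u₂ with hw₂
  set w₀ : Fin 2 → ℂ := (α:ℂ) • B.mulVec u₀ - (l:ℂ) • u₀ - (2:ℂ) • B.mulVec u₂ with hw₀
  have hD2 := deriv2_formula u₀ u₂ α Φ hΦ
  have hmain : ∀ x : ℝ,
      (-(B.mulVec (deriv (deriv Φ) x)) + ((x : ℂ) ^ 2) • A.mulVec (Φ x) = (l : ℂ) • Φ x)
        ↔ ((x:ℂ)^4 • w₄ + (x:ℂ)^2 • w₂ + w₀ = 0) := by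
    intro x
    rw [hD2 x]
    simp only [hΦ]
    have he : ((Real.exp (-α * x ^ 2 / 2) : ℝ) : ℂ) ≠ 0 :=
      Complex.ofReal_ne_zero.mpr (Real.exp_ne_zero _)
    rw [← sub_eq_zero]
    have hid : -(B.mulVec ((Real.exp (-α * x ^ 2 / 2) : ℂ) •
          ((2:ℂ) • u₂ + (-(α:ℂ)) • (u₀ + ((x:ℂ) ^ 2) • u₂)
            + (-(α:ℂ) * x) • (((2:ℂ) * x) • u₂)
            + (-(α:ℂ) * x) • (((2:ℂ) * x) • u₂ + (-(α:ℂ) * x) • (u₀ + ((x:ℂ) ^ 2) • u₂)))))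
        + ((x : ℂ) ^ 2) • A.mulVec ((Real.exp (-α * x ^ 2 / 2) : ℂ) • (u₀ + ((x : ℂ) ^ 2) • u₂))
        - (l : ℂ) • ((Real.exp (-α * x ^ 2 / 2) : ℂ) • (u₀ + ((x : ℂ) ^ 2) • u₂))
        = (Real.exp (-α * x ^ 2 / 2) : ℂ) • ((x:ℂ)^4 • w₄ + (x:ℂ)^2 • w₂ + w₀) := by
      rw [hw₄, hw₂, hw₀]
      simp only [Matrix.mulVec_add, Matrix.mulVec_smul]
      module
    rw [hid, smul_eq_zero]
    simp [he]
  have e₁ : (A - ((α : ℂ) ^ 2) • B).mulVec u₂ = w₄ := by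
    rw [hw₄]
    simp [Matrix.sub_mulVec, Matrix.smul_mulVec]
  have e₂ : (A - ((α : ℂ) ^ 2) • B).mulVec u₀
      + ((5 * (α : ℂ)) • B - (l : ℂ) • (1 : Matrix (Fin 2) (Fin 2) ℂ)).mulVec u₂ = w₂ := by
    rw [hw₂]
    simp [Matrix.sub_mulVec, Matrix.smul_mulVec, Matrix.one_mulVec]
    exact ⟨by ring, by ring⟩
  have e₃ : ((α : ℂ) • B - (l : ℂ) • (1 : Matrix (Fin 2) (Fin 2) ℂ)).mulVec u₀
      - (2 : ℂ) • B.mulVec u₂ = w₀ := by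
    rw [hw₀]
    simp [Matrix.sub_mulVec, Matrix.smul_mulVec, Matrix.one_mulVec]
    exact ⟨by ring, by ring⟩
  constructor
  · intro h
    obtain ⟨h4, h2, h0⟩ := poly_vanish_aux w₄ w₂ w₀ (fun x => (hmain x).mp (h x))
    exact ⟨by rw [e₁, h4], by rw [e₂, h2], by rw [e₃, h0]⟩
  · rintro ⟨h4, h2, h0⟩ x
    rw [hmain x]
    rw [e₁] at h4
    rw [e₂] at h2
    rw [e₃] at h0
    rw [h4, h2, h0]
    simp
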